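/- Let η₁, …, η_r be orthonormal vectors in a real Hilbert space H, let Φ be an n-dimensional subspace of H, let p = min{n, r}, suppose P_Φ η₁, …, P_Φ η_p are linearly independent, and let q₁, …, q_p be their Gram–Schmidt orthonormalization. Let 1 ≤ j ≤ k ≤ p and assume d_2(span{η₁, …, η_{j−1}}, Φ) < 1 (with span{η₁, …, η₀} = {0} when j = 1). Then d_F(span{η_j, …, η_k}, Φ)² ≤ d_F(span{q_j, …, q_k}, span{η_j, …, η_k})² ≤ d_F(span{η_j, …, η_k}, Φ)² / (1 − d_2(span{η₁, …, η_{j−1}}, Φ)²). -/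

import Mathlib

open scoped RealInnerProductSpace ENNReal
open Submodule Filter

set_option linter.unusedSectionVars false
noncomputable section

variable {H : Type*} [NormedAddCommGroup H] [InnerProductSpace ℝ H] [CompleteSpace H]

/-- Orthogonal projection onto `U`, as an operator `H → H` (defined to be `0` in the
degenerate case where `U` admits no orthogonal projection). -/
noncomputable def proj (U : Submodule ℝ H) : H →L[ℝ] H := by
  classical
  exact if h : HasOrthogonalProjection U then
    (haveI := h; U.subtypeL ∘L orthogonalProjection U)
  else 0

lemma proj_apply (U : Submodule ℝ H) [h : HasOrthogonalProjection U] (x : H) :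
    proj U x = orthogonalProjection U x := by
  simp [proj, h]

lemma proj_mem (U : Submodule ℝ H) [HasOrthogonalProjection U] (x : H) :
    proj U x ∈ U := by rw [proj_apply]; exact (orthogonalProjection U x).2

lemma proj_eq_self (U : Submodule ℝ H) [HasOrthogonalProjection U] {x : H} (hx : x ∈ U) :
    proj U x = x := by rw [proj_apply]; exact starProjection_eq_self_iff.2 hx

lemma sub_proj_mem_orthogonal (U : Submodule ℝ H) [HasOrthogonalProjection U] (x : H) :
    x - proj U x ∈ Uᗮ := by
  rw [proj_apply]; exact sub_starProjection_mem_orthogonal x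

lemma proj_orthogonal_eq (U : Submodule ℝ H) [HasOrthogonalProjection U] (x : H) :
    proj Uᗮ x = x - proj U x := by
  rw [proj_apply, proj_apply]; exact starProjection_orthogonal_val x

lemma inner_proj_left (U : Submodule ℝ H) [HasOrthogonalProjection U] (x y : H) :
    ⟪proj U x, y⟫ = ⟪x, proj U y⟫ := by
  rw [proj_apply, proj_apply]
  exact inner_starProjection_left_eq_right U x y

section ONB
variable {ι : Type*} [Fintype ι] {u : ι → H} (hu : Orthonormal ℝ u)

lemma proj_span_onb (hu : Orthonormal ℝ u) [HasOrthogonalProjection (span ℝ (Set.range u))] (x : H) :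
    proj (span ℝ (Set.range u)) x = ∑ i, ⟪u i, x⟫ • u i := by
  rw [proj_apply]
  refine eq_starProjection_of_mem_of_inner_eq_zero
    (v := ∑ i, ⟪u i, x⟫ • u i) (sum_mem fun i _ => smul_mem _ _ (subset_span (Set.mem_range_self i))) ?_
  intro w hw
  induction hw using span_induction with
  | mem y hy =>
    obtain ⟨i, rfl⟩ := hy
    rw [inner_sub_left, hu.inner_left_fintype]
    simp [real_inner_comm x (u i)]
  | zero => simp
  | add a b _ _ ha hb => rw [inner_add_right, ha, hb, add_zero]
  | smul c a _ ha => rw [inner_smul_right, ha, mul_zero]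

lemma normsq_proj_span_onb (hu : Orthonormal ℝ u)
    [HasOrthogonalProjection (span ℝ (Set.range u))] (x : H) :
    ‖proj (span ℝ (Set.range u)) x‖ ^ 2 = ∑ i, ⟪u i, x⟫ ^ 2 := by
  rw [proj_span_onb hu, ← real_inner_self_eq_norm_sq, hu.inner_sum]
  simp [sq]

end ONB

/-- Squared Hilbert–Schmidt norm of an operator, computed in a fixed Hilbert basis of `H`. -/
noncomputable def hsNormSq (A : H →L[ℝ] H) : ℝ≥0∞ :=
  ∑' i : (exists_hilbertBasis ℝ H).choose,
    (‖A ((exists_hilbertBasis ℝ H).choose_spec.choose i)‖₊ : ℝ≥0∞) ^ 2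

/-- Hilbert–Schmidt (Frobenius) norm of an operator. -/
noncomputable def hsNorm (A : H →L[ℝ] H) : ℝ := Real.sqrt (hsNormSq A).toReal

set_option maxHeartbeats 1000000 in
lemma hsNormSq_comp_proj {ι : Type*} [Fintype ι] {u : ι → H} (hu : Orthonormal ℝ u)
    [HasOrthogonalProjection (span ℝ (Set.range u))] (A : H →L[ℝ] H) :
    hsNormSq (A ∘L proj (span ℝ (Set.range u))) = ENNReal.ofReal (∑ i, ‖A (u i)‖ ^ 2) := by
  classical
  set b := (exists_hilbertBasis ℝ H).choose_spec.choose with hb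
  have hsum : HasSum (fun c => ‖A (proj (span ℝ (Set.range u)) (b c))‖ ^ 2)
      (∑ i, ‖A (u i)‖ ^ 2) := by
    have hexp : ∀ c, ‖A (proj (span ℝ (Set.range u)) (b c))‖ ^ 2 =
        ∑ i, ∑ i', (⟪u i, b c⟫ * ⟪u i', b c⟫) * ⟪A (u i'), A (u i)⟫ := by
      intro c
      rw [proj_span_onb hu, ← real_inner_self_eq_norm_sq, map_sum]
      simp only [map_smul, sum_inner, inner_sum, real_inner_smul_left, inner_smul_right,
        Finset.mul_sum]
      exact Finset.sum_congr rfl fun i _ => Finset.sum_congr rfl fun i' _ => by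
        rw [mul_assoc]
    have h1 : ∀ i i' : ι, HasSum (fun c => (⟪u i, b c⟫ * ⟪u i', b c⟫) * ⟪A (u i'), A (u i)⟫)
        (⟪u i, u i'⟫ * ⟪A (u i'), A (u i)⟫) := by
      intro i i'
      have := (b.hasSum_inner_mul_inner (u i) (u i')).mul_right ⟪A (u i'), A (u i)⟫
      convert this using 2 with c
      · rfl
      rw [real_inner_comm (b c) (u i')]
    have h2 : HasSum (fun c => ∑ i, ∑ i', (⟪u i, b c⟫ * ⟪u i', b c⟫) * ⟪A (u i'), A (u i)⟫)
        (∑ i, ∑ i', ⟪u i, u i'⟫ * ⟪A (u i'), A (u i)⟫) :=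
      hasSum_sum fun i _ => hasSum_sum fun i' _ => h1 i i'
    have h3 : (∑ i, ∑ i', ⟪u i, u i'⟫ * ⟪A (u i'), A (u i)⟫) = ∑ i, ‖A (u i)‖ ^ 2 := by
      refine Finset.sum_congr rfl fun i _ => ?_
      rw [Finset.sum_eq_single i]
      · rw [real_inner_self_eq_norm_sq, hu.1 i, one_pow, one_mul, real_inner_self_eq_norm_sq]
      · intro i' _ hne
        rw [hu.2 (Ne.symm hne), zero_mul]
      · simp
    rw [← h3, funext hexp]
    exact h2
  have hnn : ∀ c, (0:ℝ) ≤ ‖A (proj (span ℝ (Set.range u)) (b c))‖ ^ 2 := fun c => sq_nonneg _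
  calc hsNormSq (A ∘L proj (span ℝ (Set.range u)))
      = ∑' c, ENNReal.ofReal (‖A (proj (span ℝ (Set.range u)) (b c))‖ ^ 2) := by
        rw [hsNormSq]
        refine tsum_congr fun c => ?_
        rw [← ENNReal.ofReal_coe_nnreal, coe_nnnorm, ← ENNReal.ofReal_pow (norm_nonneg _)]
        rfl
    _ = ENNReal.ofReal (∑' c, ‖A (proj (span ℝ (Set.range u)) (b c))‖ ^ 2) :=
        (ENNReal.ofReal_tsum_of_nonneg hnn hsum.summable).symm
    _ = ENNReal.ofReal (∑ i, ‖A (u i)‖ ^ 2) := by rw [hsum.tsum_eq]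

/-- Projection distance `d_F(U, W) = ‖P_{Wᗮ} P_U‖_F`. -/
noncomputable def dF (U W : Submodule ℝ H) : ℝ := hsNorm ((proj Wᗮ) ∘L (proj U))

/-- Gap distance `d₂(U, W) = ‖P_{Wᗮ} P_U‖₂`. -/
noncomputable def d2 (U W : Submodule ℝ H) : ℝ := ‖(proj Wᗮ) ∘L (proj U)‖

lemma dF_sq {ι : Type*} [Fintype ι] {u : ι → H} (hu : Orthonormal ℝ u)
    [HasOrthogonalProjection (span ℝ (Set.range u))] (W : Submodule ℝ H) :
    dF (span ℝ (Set.range u)) W ^ 2 = ∑ i, ‖proj Wᗮ (u i)‖ ^ 2 := by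
  have h := hsNormSq_comp_proj hu (proj Wᗮ)
  rw [dF, hsNorm, h, ENNReal.toReal_ofReal (Finset.sum_nonneg fun i _ => sq_nonneg _)]
  rw [Real.sq_sqrt (Finset.sum_nonneg fun i _ => sq_nonneg _)]

lemma d2_le_one_bound {F Φ : Submodule ℝ H} [HasOrthogonalProjection F]
    {f : H} (hf : f ∈ F) : ‖proj Φᗮ f‖ ≤ d2 F Φ * ‖f‖ := by
  have : proj Φᗮ f = ((proj Φᗮ) ∘L (proj F)) f := by
    rw [ContinuousLinearMap.comp_apply, proj_eq_self F hf]
  rw [this]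
  exact ((proj Φᗮ) ∘L (proj F)).le_opNorm f

lemma gs (p : ℕ) (η : ℕ → H) (Φ : Submodule ℝ H) [HasOrthogonalProjection Φ]
    (hlin : LinearIndependent ℝ (fun i : Set.Icc 1 p => proj Φ (η i.1)))
    (q : ℕ → H)
    (hq : ∀ i ∈ Set.Icc 1 p,
      q i = ‖proj Φ (η i) - ∑ l ∈ Finset.Ico 1 i, ⟪q l, η i⟫ • q l‖⁻¹ •
            (proj Φ (η i) - ∑ l ∈ Finset.Ico 1 i, ⟪q l, η i⟫ • q l)) :
    ∀ m, m ≤ p →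
      (∀ i ∈ Set.Icc 1 m, ‖q i‖ = 1 ∧ q i ∈ Φ) ∧
      (∀ i ∈ Set.Icc 1 m, ∀ l ∈ Set.Icc 1 m, l ≠ i → ⟪q l, q i⟫ = 0) ∧
      span ℝ (q '' Set.Icc 1 m) = span ℝ ((fun i => proj Φ (η i)) '' Set.Icc 1 m) := by
  set v : ℕ → H := fun i => proj Φ (η i) with hv
  intro m
  induction m with
  | zero =>
    intro _
    refine ⟨fun i hi => absurd (Set.mem_Icc.1 hi) (by omega),
      fun i hi => absurd (Set.mem_Icc.1 hi) (by omega), ?_⟩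
    simp [Set.Icc_eq_empty_of_lt]
  | succ m ih =>
    intro hmp
    obtain ⟨ih1, ih2, ih3⟩ := ih (by omega)
    obtain ⟨i, hi⟩ : ∃ i, i = m + 1 := ⟨m + 1, rfl⟩
    rw [← hi]
    have him : i ≤ p := by omega
    have hip : i ∈ Set.Icc 1 p := Set.mem_Icc.2 ⟨by omega, him⟩
    have hqi := hq i hip
    set qt := v i - ∑ l ∈ Finset.Ico 1 i, ⟪q l, η i⟫ • q l with hqt
    have hsum_mem : (∑ l ∈ Finset.Ico 1 i, ⟪q l, η i⟫ • q l) ∈ span ℝ (q '' Set.Icc 1 m) := by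
      refine sum_mem fun l hl => smul_mem _ _ (subset_span ?_)
      rw [Finset.mem_Ico] at hl
      exact ⟨l, ⟨hl.1, by omega⟩, rfl⟩
    have hvnm : v i ∉ span ℝ (v '' Set.Icc 1 m) := by
      intro hmem
      have himg : v '' Set.Icc 1 m =
          (fun l : Set.Icc 1 p => v l.1) '' {l : Set.Icc 1 p | l.1 ≤ m} := by
        ext x
        constructor
        · rintro ⟨y, hy, rfl⟩
          rw [Set.mem_Icc] at hy
          exact ⟨⟨y, Set.mem_Icc.2 ⟨hy.1, by omega⟩⟩, hy.2, rfl⟩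
        · rintro ⟨⟨y, hy⟩, hmem', rfl⟩
          rw [Set.mem_Icc] at hy
          exact ⟨y, ⟨hy.1, hmem'⟩, rfl⟩
      have hnot := hlin.notMem_span_image (x := (⟨i, hip⟩ : Set.Icc 1 p))
        (s := {l : Set.Icc 1 p | l.1 ≤ m}) (by simp only [Set.mem_setOf_eq]; omega)
      rw [← himg] at hnot
      exact hnot hmem
    have hqtne : qt ≠ 0 := by
      intro h0
      apply hvnm
      have h0' : v i = ∑ l ∈ Finset.Ico 1 i, ⟪q l, η i⟫ • q l := by
        rw [hqt, sub_eq_zero] at h0; exact h0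
      rw [h0', ← ih3]
      exact hsum_mem
    have hqtnorm : ‖qt‖ ≠ 0 := norm_ne_zero_iff.2 hqtne
    -- norm 1 and membership in Φ for q i
    have hqinorm : ‖q i‖ = 1 := by
      rw [hqi, norm_smul, norm_inv, norm_norm, inv_mul_cancel₀ hqtnorm]
    have hqtΦ : qt ∈ Φ := by
      refine sub_mem (proj_mem Φ (η i)) (sum_mem fun l hl => smul_mem _ _ ?_)
      rw [Finset.mem_Ico] at hl
      exact (ih1 l ⟨hl.1, by omega⟩).2
    have hqiΦ : q i ∈ Φ := by rw [hqi]; exact smul_mem _ _ hqtΦ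
    -- orthogonality of q i against earlier q l
    have horth : ∀ l ∈ Set.Icc 1 m, ⟪q l, q i⟫ = 0 := by
      intro l hl
      rw [Set.mem_Icc] at hl
      have hqlΦ := (ih1 l (Set.mem_Icc.2 hl)).2
      have hinner_qt : ⟪q l, qt⟫ = 0 := by
        rw [hqt, inner_sub_right, inner_sum]
        have hsum_eq : (∑ l' ∈ Finset.Ico 1 i, ⟪q l, ⟪q l', η i⟫ • q l'⟫) = ⟪q l, η i⟫ := by
          rw [Finset.sum_eq_single l]
          · rw [real_inner_smul_right, real_inner_self_eq_norm_sq,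
              (ih1 l (Set.mem_Icc.2 hl)).1]
            ring
          · intro l' hl' hne
            rw [Finset.mem_Ico] at hl'
            rw [real_inner_smul_right,
              ih2 l' ⟨hl'.1, by omega⟩ l (Set.mem_Icc.2 hl) (Ne.symm hne), mul_zero]
          · intro habs
            exact absurd (Finset.mem_Ico.2 ⟨hl.1, by omega⟩) habs
        rw [hsum_eq]
        have : ⟪q l, v i⟫ = ⟪q l, η i⟫ := by
          show ⟪q l, proj Φ (η i)⟫ = ⟪q l, η i⟫
          rw [← inner_proj_left Φ (q l) (η i), proj_eq_self Φ hqlΦ]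
        rw [this, sub_self]
      rw [hqi, real_inner_smul_right, hinner_qt, mul_zero]
    -- assemble
    refine ⟨?_, ?_, ?_⟩
    · intro i' hi'
      rw [Set.mem_Icc] at hi'
      rcases Nat.lt_or_ge i' i with hlt | hge
      · exact ih1 i' (Set.mem_Icc.2 ⟨hi'.1, by omega⟩)
      · have : i' = i := by omega
        rw [this]
        exact ⟨hqinorm, hqiΦ⟩
    · intro i' hi' l hl hne
      rw [Set.mem_Icc] at hi' hl
      rcases Nat.lt_or_ge i' i with hlt1 | hge1 <;> rcases Nat.lt_or_ge l i with hlt2 | hge2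
      · exact ih2 i' (Set.mem_Icc.2 ⟨hi'.1, by omega⟩) l (Set.mem_Icc.2 ⟨hl.1, by omega⟩) hne
      · have hle : l = i := by omega
        subst hle
        rw [real_inner_comm]
        exact horth i' (Set.mem_Icc.2 ⟨hi'.1, by omega⟩)
      · have : i' = i := by omega
        subst this
        exact horth l (Set.mem_Icc.2 ⟨hl.1, by omega⟩)
      · omega
    · -- span equality
      have hIcc : Set.Icc 1 i = insert i (Set.Icc 1 m) := by
        ext x; simp only [Set.mem_insert_iff, Set.mem_Icc]; omega
      have hqspan : q i ∈ span ℝ (v '' Set.Icc 1 i) := by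
        rw [hqi]
        refine smul_mem _ _ (sub_mem (subset_span ⟨i, Set.mem_Icc.2 ⟨by omega, le_refl i⟩, rfl⟩) ?_)
        have : span ℝ (v '' Set.Icc 1 m) ≤ span ℝ (v '' Set.Icc 1 i) :=
          span_mono (Set.image_mono (Set.Icc_subset_Icc_right (by omega)))
        exact this (ih3 ▸ hsum_mem)
      have hvspan : v i ∈ span ℝ (q '' Set.Icc 1 i) := by
        have hexp : v i = ‖qt‖ • q i + ∑ l ∈ Finset.Ico 1 i, ⟪q l, η i⟫ • q l := by
          rw [hqi, smul_smul, mul_inv_cancel₀ hqtnorm, one_smul, hqt]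
          ring_nf
          abel
        rw [hexp]
        refine add_mem (smul_mem _ _ (subset_span ⟨i, Set.mem_Icc.2 ⟨by omega, le_refl i⟩, rfl⟩)) ?_
        have hle : span ℝ (q '' Set.Icc 1 m) ≤ span ℝ (q '' Set.Icc 1 i) :=
          span_mono (Set.image_mono (Set.Icc_subset_Icc_right (by omega)))
        exact hle hsum_mem
      apply le_antisymm
      · rw [span_le]
        rintro x ⟨y, hy, rfl⟩
        rw [hIcc] at hy
        rcases hy with rfl | hy
        · exact hqspan
        · have : q y ∈ span ℝ (v '' Set.Icc 1 m) := ih3 ▸ subset_span ⟨y, hy, rfl⟩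
          exact span_mono (Set.image_mono (Set.Icc_subset_Icc_right (by omega))) this
      · rw [span_le]
        rintro x ⟨y, hy, rfl⟩
        rw [hIcc] at hy
        rcases hy with rfl | hy
        · exact hvspan
        · have : v y ∈ span ℝ (q '' Set.Icc 1 m) := ih3.symm ▸ subset_span ⟨y, hy, rfl⟩
          exact span_mono (Set.image_mono (Set.Icc_subset_Icc_right (by omega))) this

lemma key_est {F Φ : Submodule ℝ H} [HasOrthogonalProjection F] [HasOrthogonalProjection Φ]
    (G : Submodule ℝ H) [HasOrthogonalProjection G]
    (hG : G ≤ Submodule.map (proj Φ : H →ₗ[ℝ] H) F)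
    {x : H} (hx : x ∈ Fᗮ) (hδ : d2 F Φ < 1) :
    (1 - d2 F Φ ^ 2) * ‖proj G x‖ ^ 2 ≤ d2 F Φ ^ 2 * ‖proj Φᗮ x‖ ^ 2 := by
  set δ := d2 F Φ with hδdef
  have hδ0 : 0 ≤ δ := norm_nonneg _
  set g := proj G x with hg
  obtain ⟨f, hfF, hfg⟩ := hG (proj_mem G x)
  have hfg' : proj Φ f = g := hfg
  have h1 : ⟪g, x⟫ = ‖g‖ ^ 2 := by
    have hxd : ⟪g, x - proj G x⟫ = 0 :=
      inner_right_of_mem_orthogonal (proj_mem G x) (sub_proj_mem_orthogonal G x)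
    have hsp : ⟪g, x⟫ = ⟪g, proj G x⟫ + ⟪g, x - proj G x⟫ := by
      rw [← inner_add_right, add_sub_cancel]
    rw [hsp, hxd, add_zero, ← hg, real_inner_self_eq_norm_sq]
  have h2 : ⟪g, x⟫ = -⟪proj Φᗮ f, proj Φᗮ x⟫ := by
    have hd : g = f - proj Φᗮ f := by
      rw [proj_orthogonal_eq Φ f, ← hfg']
      abel
    have hfx : ⟪f, x⟫ = 0 := inner_right_of_mem_orthogonal hfF hx
    have hsplit : ⟪proj Φᗮ f, x⟫ = ⟪proj Φᗮ f, proj Φᗮ x⟫ := by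
      have hz : ⟪proj Φᗮ f, x - proj Φᗮ x⟫ = 0 := by
        rw [proj_orthogonal_eq Φ x, sub_sub_cancel]
        exact inner_left_of_mem_orthogonal (proj_mem Φ x) (proj_mem Φᗮ f)
      have hsp2 : ⟪proj Φᗮ f, x⟫ = ⟪proj Φᗮ f, proj Φᗮ x⟫ + ⟪proj Φᗮ f, x - proj Φᗮ x⟫ := by
        rw [← inner_add_right, add_sub_cancel]
      rw [hsp2, hz, add_zero]
    rw [hd, inner_sub_left, hfx, hsplit]
    ring
  have h3 : ‖proj Φᗮ f‖ ≤ δ * ‖f‖ := d2_le_one_bound hfF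
  have h4 : ‖f‖ ^ 2 = ‖g‖ ^ 2 + ‖proj Φᗮ f‖ ^ 2 := by
    have hdec : ‖f‖ ^ 2 = ‖g + proj Φᗮ f‖ ^ 2 := by
      congr 1
      rw [← hfg', proj_orthogonal_eq Φ f, add_sub_cancel]
    have hperp : ⟪g, proj Φᗮ f⟫ = 0 := by
      rw [← hfg']
      exact inner_right_of_mem_orthogonal (proj_mem Φ f) (proj_mem Φᗮ f)
    rw [hdec, norm_add_sq_real, hperp]
    ring
  have h5 : ‖g‖ ^ 2 ≤ δ * ‖f‖ * ‖proj Φᗮ x‖ := by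
    rw [← h1, h2]
    calc -⟪proj Φᗮ f, proj Φᗮ x⟫ ≤ |⟪proj Φᗮ f, proj Φᗮ x⟫| := neg_le_abs _
      _ ≤ ‖proj Φᗮ f‖ * ‖proj Φᗮ x‖ := abs_real_inner_le_norm _ _
      _ ≤ δ * ‖f‖ * ‖proj Φᗮ x‖ := mul_le_mul_of_nonneg_right h3 (norm_nonneg _)
  have h6 : (1 - δ ^ 2) * ‖f‖ ^ 2 ≤ ‖g‖ ^ 2 := by nlinarith [norm_nonneg (proj Φᗮ f)]
  rcases eq_or_lt_of_le (norm_nonneg g) with hg0 | hg0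
  · rw [← hg0]
    have : (0:ℝ) ^ 2 = 0 := by norm_num
    rw [this, mul_zero]
    positivity
  · nlinarith [norm_nonneg (proj Φᗮ x), norm_nonneg f, mul_nonneg hδ0 (norm_nonneg f),
      sq_nonneg (δ * ‖f‖ - ‖g‖), mul_pos hg0 hg0]

lemma mem_orthogonal_span {S : Set H} {x : H} (h : ∀ y ∈ S, ⟪y, x⟫ = 0) :
    x ∈ (span ℝ S)ᗮ := by
  rw [Submodule.mem_orthogonal]
  intro u hu
  induction hu using span_induction with
  | mem y hy => exact h y hy
  | zero => simp
  | add a b _ _ ha hb => rw [inner_add_left, ha, hb, add_zero]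
  | smul c a _ ha => rw [inner_smul_left, ha, mul_zero]

lemma proj_eq_of {U : Submodule ℝ H} [HasOrthogonalProjection U] {x y : H}
    (hy : y ∈ U) (hxy : x - y ∈ Uᗮ) : proj U x = y := by
  rw [proj_apply]; exact eq_starProjection_of_mem_orthogonal hy hxy

lemma norm_proj_orth_sq {U : Submodule ℝ H} [HasOrthogonalProjection U] (x : H) :
    ‖proj Uᗮ x‖ ^ 2 = ‖x‖ ^ 2 - ‖proj U x‖ ^ 2 := by
  have hperp : ⟪proj U x, x - proj U x⟫ = 0 :=
    inner_right_of_mem_orthogonal (proj_mem U x) (sub_proj_mem_orthogonal U x)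
  have hx : ‖x‖ ^ 2 = ‖proj U x + (x - proj U x)‖ ^ 2 := by
    rw [add_sub_cancel]
  rw [norm_add_sq_real, hperp] at hx
  rw [proj_orthogonal_eq]
  linarith

set_option maxHeartbeats 1000000 in
/-- Sharper lag-time-independent bound: if `d₂(span{η₁..η_{j−1}}, Φ) < 1`,
then `d_F(span{η_j..η_k}, Φ)² ≤ d_F(span{q_j..q_k}, span{η_j..η_k})²
  ≤ d_F(span{η_j..η_k}, Φ)² / (1 − d₂(span{η₁..η_{j−1}}, Φ)²)`. -/
theorem stmt17 {H : Type*} [NormedAddCommGroup H] [InnerProductSpace ℝ H] [CompleteSpace H]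
    (r n : ℕ) (hr : 1 ≤ r) (η : ℕ → H)
    (hη : ∀ i ∈ Set.Icc 1 r, ∀ j ∈ Set.Icc 1 r, ⟪η i, η j⟫ = if i = j then (1 : ℝ) else 0)
    (Φ : Submodule ℝ H) (hΦfd : FiniteDimensional ℝ Φ) (hΦn : Module.finrank ℝ Φ = n)
    (hlin : LinearIndependent ℝ (fun i : Set.Icc 1 (min n r) => proj Φ (η i.1)))
    (q : ℕ → H)
    (hq : ∀ i ∈ Set.Icc 1 (min n r),
      q i = ‖proj Φ (η i) - ∑ l ∈ Finset.Ico 1 i, ⟪q l, η i⟫ • q l‖⁻¹ •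
            (proj Φ (η i) - ∑ l ∈ Finset.Ico 1 i, ⟪q l, η i⟫ • q l))
    (j k : ℕ) (hj : 1 ≤ j) (hjk : j ≤ k) (hk : k ≤ min n r)
    (hd2 : d2 (span ℝ (η '' Set.Icc 1 (j - 1))) Φ < 1) :
    dF (span ℝ (η '' Set.Icc j k)) Φ ^ 2 ≤
        dF (span ℝ (q '' Set.Icc j k)) (span ℝ (η '' Set.Icc j k)) ^ 2 ∧
      dF (span ℝ (q '' Set.Icc j k)) (span ℝ (η '' Set.Icc j k)) ^ 2 ≤
        dF (span ℝ (η '' Set.Icc j k)) Φ ^ 2 /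
          (1 - d2 (span ℝ (η '' Set.Icc 1 (j - 1))) Φ ^ 2) := by
  classical
  set p := min n r with hp
  have hkr : k ≤ r := le_trans hk (min_le_right n r)
  have hjp : j ≤ p := le_trans hjk hk
  haveI : CompleteSpace Φ := FiniteDimensional.complete ℝ Φ
  have hgs := gs p η Φ hlin q hq
  obtain ⟨hn1, hor, _⟩ := hgs p le_rfl
  -- basic facts about η
  have hηnorm : ∀ m, 1 ≤ m → m ≤ r → ‖η m‖ = 1 := by
    intro m h1 h2
    have h := hη m ⟨h1, h2⟩ m ⟨h1, h2⟩
    rw [if_pos rfl, real_inner_self_eq_norm_sq] at h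
    nlinarith [norm_nonneg (η m)]
  have hηorth : ∀ m m', 1 ≤ m → m ≤ r → 1 ≤ m' → m' ≤ r → m ≠ m' → ⟪η m, η m'⟫ = 0 := by
    intro m m' h1 h2 h3 h4 hne
    have h := hη m ⟨h1, h2⟩ m' ⟨h3, h4⟩
    rwa [if_neg hne] at h
  -- orthonormal families
  have hηon : Orthonormal ℝ (fun i : ↥(Set.Icc j k) => η i.1) := by
    constructor
    · intro i
      have hi := Set.mem_Icc.1 i.2
      exact hηnorm i.1 (by omega) (by omega)
    · intro i i' hne
      have hi := Set.mem_Icc.1 i.2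
      have hi' := Set.mem_Icc.1 i'.2
      exact hηorth i.1 i'.1 (by omega) (by omega) (by omega) (by omega)
        (fun hc => hne (Subtype.ext hc))
  have hqon : ∀ a b : ℕ, 1 ≤ a → b ≤ p → Orthonormal ℝ (fun i : ↥(Set.Icc a b) => q i.1) := by
    intro a b ha hb
    constructor
    · intro i
      have hi := Set.mem_Icc.1 i.2
      exact (hn1 i.1 ⟨by omega, by omega⟩).1
    · intro i i' hne
      have hi := Set.mem_Icc.1 i.2
      have hi' := Set.mem_Icc.1 i'.2
      exact hor i'.1 ⟨by omega, by omega⟩ i.1 ⟨by omega, by omega⟩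
        (fun hc => hne (Subtype.ext hc))
  -- finite-dimensionality instances
  haveI hfdE : FiniteDimensional ℝ (span ℝ (η '' Set.Icc j k)) :=
    FiniteDimensional.span_of_finite ℝ ((Set.finite_Icc _ _).image _)
  haveI : CompleteSpace (span ℝ (η '' Set.Icc j k)) := FiniteDimensional.complete ℝ _
  haveI hfdQ : FiniteDimensional ℝ (span ℝ (q '' Set.Icc j k)) :=
    FiniteDimensional.span_of_finite ℝ ((Set.finite_Icc _ _).image _)
  haveI : CompleteSpace (span ℝ (q '' Set.Icc j k)) := FiniteDimensional.complete ℝ _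
  haveI hfdF : FiniteDimensional ℝ (span ℝ (η '' Set.Icc 1 (j - 1))) :=
    FiniteDimensional.span_of_finite ℝ ((Set.finite_Icc _ _).image _)
  haveI : CompleteSpace (span ℝ (η '' Set.Icc 1 (j - 1))) := FiniteDimensional.complete ℝ _
  haveI hfdG : FiniteDimensional ℝ (span ℝ (q '' Set.Icc 1 (j - 1))) :=
    FiniteDimensional.span_of_finite ℝ ((Set.finite_Icc _ _).image _)
  haveI : CompleteSpace (span ℝ (q '' Set.Icc 1 (j - 1))) := FiniteDimensional.complete ℝ _
  -- range rewriting
  have hEr : span ℝ (η '' Set.Icc j k) =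
      span ℝ (Set.range fun i : ↥(Set.Icc j k) => η i.1) := by
    rw [← Set.image_eq_range]
  have hQr : span ℝ (q '' Set.Icc j k) =
      span ℝ (Set.range fun i : ↥(Set.Icc j k) => q i.1) := by
    rw [← Set.image_eq_range]
  have hGr : span ℝ (q '' Set.Icc 1 (j - 1)) =
      span ℝ (Set.range fun i : ↥(Set.Icc 1 (j - 1)) => q i.1) := by
    rw [← Set.image_eq_range]
  -- dF formulas
  have hdFE : dF (span ℝ (η '' Set.Icc j k)) Φ ^ 2 =
      ∑ m ∈ Finset.Icc j k, ‖proj Φᗮ (η m)‖ ^ 2 := by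
    rw [hEr]
    haveI : HasOrthogonalProjection (span ℝ (Set.range fun i : ↥(Set.Icc j k) => η i.1)) := by
      rw [← hEr]; infer_instance
    rw [dF_sq hηon Φ, Finset.sum_set_coe (f := fun m => ‖proj Φᗮ (η m)‖ ^ 2), Set.toFinset_Icc]
  have hdFQ : dF (span ℝ (q '' Set.Icc j k)) (span ℝ (η '' Set.Icc j k)) ^ 2 =
      ∑ i ∈ Finset.Icc j k, ‖proj (span ℝ (η '' Set.Icc j k))ᗮ (q i)‖ ^ 2 := by
    rw [hQr]
    haveI : HasOrthogonalProjection (span ℝ (Set.range fun i : ↥(Set.Icc j k) => q i.1)) := by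
      rw [← hQr]; infer_instance
    rw [dF_sq (hqon j k hj hk) (span ℝ (η '' Set.Icc j k)),
      Finset.sum_set_coe (f := fun i => ‖proj (span ℝ (η '' Set.Icc j k))ᗮ (q i)‖ ^ 2),
      Set.toFinset_Icc]
  -- vanishing inner products ⟪q l, η m⟫ = 0 for m < l ≤ p, 1 ≤ m
  have hzero : ∀ m l, 1 ≤ m → m < l → l ≤ p → ⟪q l, η m⟫ = 0 := by
    intro m l h1 h2 h3
    haveI : FiniteDimensional ℝ (span ℝ (q '' Set.Icc 1 m)) :=
      FiniteDimensional.span_of_finite ℝ ((Set.finite_Icc _ _).image _)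
    haveI : CompleteSpace (span ℝ (q '' Set.Icc 1 m)) := FiniteDimensional.complete ℝ _
    have hvm : proj Φ (η m) ∈ span ℝ (q '' Set.Icc 1 m) := by
      rw [(hgs m (by omega)).2.2]
      exact subset_span ⟨m, ⟨h1, le_refl m⟩, rfl⟩
    have hql : q l ∈ (span ℝ (q '' Set.Icc 1 m))ᗮ := by
      apply mem_orthogonal_span
      rintro y ⟨l', hl', rfl⟩
      rw [Set.mem_Icc] at hl'
      exact hor l ⟨by omega, h3⟩ l' ⟨hl'.1, by omega⟩ (by omega)
    have h1' : ⟪q l, proj Φ (η m)⟫ = 0 := by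
      rw [real_inner_comm]
      exact inner_right_of_mem_orthogonal hvm hql
    have h2' : ⟪q l, η m - proj Φ (η m)⟫ = 0 := by
      exact inner_right_of_mem_orthogonal (hn1 l ⟨by omega, h3⟩).2
        (sub_proj_mem_orthogonal Φ (η m))
    have : ⟪q l, η m⟫ = ⟪q l, proj Φ (η m)⟫ + ⟪q l, η m - proj Φ (η m)⟫ := by
      rw [← inner_add_right, add_sub_cancel]
    rw [this, h1', h2', add_zero]
  -- term computation for proj Φᗮ (η m)
  have hterm2 : ∀ m ∈ Finset.Icc j k, ‖proj Φᗮ (η m)‖ ^ 2 =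
      1 - ∑ l ∈ Finset.Icc 1 m, ⟪q l, η m⟫ ^ 2 := by
    intro m hm
    rw [Finset.mem_Icc] at hm
    haveI : FiniteDimensional ℝ (span ℝ (q '' Set.Icc 1 m)) :=
      FiniteDimensional.span_of_finite ℝ ((Set.finite_Icc _ _).image _)
    haveI : CompleteSpace (span ℝ (q '' Set.Icc 1 m)) := FiniteDimensional.complete ℝ _
    have hGmr : span ℝ (q '' Set.Icc 1 m) =
        span ℝ (Set.range fun i : ↥(Set.Icc 1 m) => q i.1) := by
      rw [← Set.image_eq_range]
    have hproj_eq : proj (span ℝ (q '' Set.Icc 1 m)) (η m) = proj Φ (η m) := by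
      apply proj_eq_of
      · rw [(hgs m (by omega)).2.2]
        exact subset_span ⟨m, ⟨by omega, le_refl m⟩, rfl⟩
      · have hle : span ℝ (q '' Set.Icc 1 m) ≤ Φ := by
          rw [span_le]
          rintro y ⟨l, hl, rfl⟩
          rw [Set.mem_Icc] at hl
          exact (hn1 l ⟨hl.1, by omega⟩).2
        exact Submodule.orthogonal_le hle (sub_proj_mem_orthogonal Φ (η m))
    have hnp : ‖proj Φ (η m)‖ ^ 2 = ∑ l ∈ Finset.Icc 1 m, ⟪q l, η m⟫ ^ 2 := by
      rw [← hproj_eq]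
      haveI : HasOrthogonalProjection (span ℝ (Set.range fun i : ↥(Set.Icc 1 m) => q i.1)) := by
        rw [← hGmr]; infer_instance
      rw [hGmr, normsq_proj_span_onb (hqon 1 m le_rfl (by omega)),
        Finset.sum_set_coe (f := fun l => ⟪q l, η m⟫ ^ 2), Set.toFinset_Icc]
    rw [norm_proj_orth_sq, hηnorm m (by omega) (by omega), hnp, one_pow]
  -- term computation for proj Eᗮ (q i)
  have hterm1 : ∀ i ∈ Finset.Icc j k, ‖proj (span ℝ (η '' Set.Icc j k))ᗮ (q i)‖ ^ 2 =
      1 - ∑ m ∈ Finset.Icc j k, ⟪η m, q i⟫ ^ 2 := by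
    intro i hi
    rw [Finset.mem_Icc] at hi
    have hnp : ‖proj (span ℝ (η '' Set.Icc j k)) (q i)‖ ^ 2 =
        ∑ m ∈ Finset.Icc j k, ⟪η m, q i⟫ ^ 2 := by
      rw [hEr]
      haveI : HasOrthogonalProjection (span ℝ (Set.range fun i : ↥(Set.Icc j k) => η i.1)) := by
        rw [← hEr]; infer_instance
      rw [normsq_proj_span_onb hηon,
        Finset.sum_set_coe (f := fun m => ⟪η m, q i⟫ ^ 2), Set.toFinset_Icc]
    rw [norm_proj_orth_sq, (hn1 i ⟨by omega, by omega⟩).1, hnp, one_pow]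
  -- main summation identity
  have hsum_id : ∑ i ∈ Finset.Icc j k, ‖proj (span ℝ (η '' Set.Icc j k))ᗮ (q i)‖ ^ 2 =
      (∑ m ∈ Finset.Icc j k, ‖proj Φᗮ (η m)‖ ^ 2) +
      ∑ m ∈ Finset.Icc j k, ∑ l ∈ Finset.Icc 1 (j - 1), ⟪q l, η m⟫ ^ 2 := by
    rw [Finset.sum_congr rfl hterm1, Finset.sum_congr rfl hterm2]
    rw [Finset.sum_sub_distrib, Finset.sum_sub_distrib]
    have hsplit : ∀ m ∈ Finset.Icc j k, ∑ l ∈ Finset.Icc 1 m, ⟪q l, η m⟫ ^ 2 =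
        (∑ l ∈ Finset.Icc 1 (j - 1), ⟪q l, η m⟫ ^ 2) +
        ∑ l ∈ Finset.Icc j k, ⟪q l, η m⟫ ^ 2 := by
      intro m hm
      rw [Finset.mem_Icc] at hm
      have hun : Finset.Icc 1 m = Finset.Icc 1 (j - 1) ∪ Finset.Icc j m := by
        ext x; simp only [Finset.mem_union, Finset.mem_Icc]; omega
      have hdisj : Disjoint (Finset.Icc 1 (j - 1)) (Finset.Icc j m) := by
        rw [Finset.disjoint_left]
        intro x hx hx'
        rw [Finset.mem_Icc] at hx hx'
        omega
      rw [hun, Finset.sum_union hdisj]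
      congr 1
      apply Finset.sum_subset
      · intro x hx
        rw [Finset.mem_Icc] at hx ⊢
        omega
      · intro x hx hnx
        rw [Finset.mem_Icc] at hx
        rw [Finset.mem_Icc] at hnx
        rw [hzero m x (by omega) (by omega) (by omega)]
        ring
    rw [Finset.sum_congr rfl hsplit, Finset.sum_add_distrib]
    have hcomm : ∑ m ∈ Finset.Icc j k, ∑ l ∈ Finset.Icc j k, ⟪q l, η m⟫ ^ 2 =
        ∑ i ∈ Finset.Icc j k, ∑ m ∈ Finset.Icc j k, ⟪η m, q i⟫ ^ 2 := by
      rw [Finset.sum_comm]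
      refine Finset.sum_congr rfl fun l _ => Finset.sum_congr rfl fun m _ => ?_
      rw [real_inner_comm]
    rw [hcomm]
    ring
  -- key estimate summed
  set δ := d2 (span ℝ (η '' Set.Icc 1 (j - 1))) Φ with hδ
  have hδ0 : 0 ≤ δ := norm_nonneg _
  have h1δ : 0 < 1 - δ ^ 2 := by nlinarith
  have hGle : span ℝ (q '' Set.Icc 1 (j - 1)) ≤
      Submodule.map (proj Φ : H →ₗ[ℝ] H) (span ℝ (η '' Set.Icc 1 (j - 1))) := by
    rw [(hgs (j - 1) (by omega)).2.2, Submodule.map_span]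
    rw [show (proj Φ : H →ₗ[ℝ] H) '' (η '' Set.Icc 1 (j - 1)) =
      (fun i => proj Φ (η i)) '' Set.Icc 1 (j - 1) from (Set.image_image _ _ _)]
  have hkey : ∀ m ∈ Finset.Icc j k,
      (1 - δ ^ 2) * (∑ l ∈ Finset.Icc 1 (j - 1), ⟪q l, η m⟫ ^ 2) ≤
      δ ^ 2 * ‖proj Φᗮ (η m)‖ ^ 2 := by
    intro m hm
    rw [Finset.mem_Icc] at hm
    have hxF : η m ∈ (span ℝ (η '' Set.Icc 1 (j - 1)))ᗮ := by
      apply mem_orthogonal_span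
      rintro y ⟨l, hl, rfl⟩
      rw [Set.mem_Icc] at hl
      exact hηorth l m (by omega) (by omega) (by omega) (by omega) (by omega)
    have hest := key_est (F := span ℝ (η '' Set.Icc 1 (j - 1))) (Φ := Φ)
      (span ℝ (q '' Set.Icc 1 (j - 1))) hGle hxF hd2
    have hGn : ‖proj (span ℝ (q '' Set.Icc 1 (j - 1))) (η m)‖ ^ 2 =
        ∑ l ∈ Finset.Icc 1 (j - 1), ⟪q l, η m⟫ ^ 2 := by
      rw [hGr]
      haveI : HasOrthogonalProjection
          (span ℝ (Set.range fun i : ↥(Set.Icc 1 (j - 1)) => q i.1)) := by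
        rw [← hGr]; infer_instance
      rw [normsq_proj_span_onb (hqon 1 (j - 1) le_rfl (by omega)),
        Finset.sum_set_coe (f := fun l => ⟪q l, η m⟫ ^ 2), Set.toFinset_Icc]
    rw [hGn] at hest
    exact hest
  have hkeysum : (1 - δ ^ 2) *
      (∑ m ∈ Finset.Icc j k, ∑ l ∈ Finset.Icc 1 (j - 1), ⟪q l, η m⟫ ^ 2) ≤
      δ ^ 2 * ∑ m ∈ Finset.Icc j k, ‖proj Φᗮ (η m)‖ ^ 2 := by
    rw [Finset.mul_sum, Finset.mul_sum]
    exact Finset.sum_le_sum hkey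
  have hTnn : 0 ≤ ∑ m ∈ Finset.Icc j k, ∑ l ∈ Finset.Icc 1 (j - 1), ⟪q l, η m⟫ ^ 2 :=
    Finset.sum_nonneg fun m _ => Finset.sum_nonneg fun l _ => sq_nonneg _
  have hSnn : 0 ≤ ∑ m ∈ Finset.Icc j k, ‖proj Φᗮ (η m)‖ ^ 2 :=
    Finset.sum_nonneg fun m _ => sq_nonneg _
  constructor
  · rw [hdFE, hdFQ, hsum_id]
    linarith
  · rw [hdFE, hdFQ, hsum_id, le_div_iff₀ h1δ]
    nlinarith

end
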